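/- Let X be a Boolean space, M a monoid, and (λ_m)_{m ∈ M} a family of continuous maps X → X (the components of a left action of M on X, i.e., λ_1 = id and λ_{m·m'} = λ_m ∘ λ_{m'}). Let S be a finite subset of M and m ∈ M. Then for every closed K ⊆ X and x ∈ X, the set {λ_s(x) : s ∈ S} ∪ λ_m[K] is closed in X, and the map V(X) × X → V(X) × X sending (K, x) to ({λ_s(x) : s ∈ S} ∪ λ_m[K], λ_m(x)) is continuous, where V(X) × X carries the product topology. -/
import Mathlib


/-- The points of the Vietoris space of `X`: the closed subsets of `X`. -/
structure VClosed (X : Type*) [TopologicalSpace X] where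
  carrier : Set X
  isClosed : IsClosed carrier

/-- The Vietoris topology on the closed subsets of `X`, generated by the subbasic sets
`◊U = {K : K ∩ U ≠ ∅}` and `□U = {K : K ⊆ U}` for `U` open. -/
instance VClosed.instTopologicalSpace (X : Type*) [TopologicalSpace X] :
    TopologicalSpace (VClosed X) :=
  TopologicalSpace.generateFrom
    ({s | ∃ U : Set X, IsOpen U ∧ s = {K : VClosed X | (K.carrier ∩ U).Nonempty}} ∪
     {s | ∃ U : Set X, IsOpen U ∧ s = {K : VClosed X | K.carrier ⊆ U}})

/-- Continuity of the left-action components on the unary Schützenberger product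
`◊X = V(X) × X` of a Boolean space `X`: for a left action of a monoid `M` on `X` with
continuous components, a finite `S ⊆ M` and `m ∈ M`, the set
`{λ_s(x) : s ∈ S} ∪ λ_m[K]` is closed for every closed `K` and every `x`, and the map
`(K, x) ↦ ({λ_s(x) : s ∈ S} ∪ λ_m[K], λ_m(x))` on `V(X) × X` is continuous. -/
theorem stmt4 {X : Type*} [TopologicalSpace X] [CompactSpace X] [T2Space X]
    [TotallyDisconnectedSpace X]
    {M : Type*} [Monoid M] (lam : M → X → X)
    (hcont : ∀ m : M, Continuous (lam m))
    (hone : lam 1 = id)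
    (hmul : ∀ m m' : M, lam (m * m') = lam m ∘ lam m')
    (S : Finset M) (m : M) :
    ∃ hcl : ∀ (K : Set X), IsClosed K → ∀ x : X,
        IsClosed ((fun s : M => lam s x) '' (S : Set M) ∪ lam m '' K),
      Continuous (fun p : VClosed X × X =>
        ((⟨(fun s : M => lam s p.2) '' (S : Set M) ∪ lam m '' p.1.carrier,
            hcl p.1.carrier p.1.isClosed p.2⟩ : VClosed X), lam m p.2)) := by
  have hcl : ∀ (K : Set X), IsClosed K → ∀ x : X,
      IsClosed ((fun s : M => lam s x) '' (S : Set M) ∪ lam m '' K) := by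
    intro K hK x
    exact (S.finite_toSet.image _).isClosed.union
      ((hK.isCompact.image (hcont m)).isClosed)
  refine ⟨hcl, ?_⟩
  refine Continuous.prodMk ?_ ((hcont m).comp continuous_snd)
  rw [continuous_generateFrom_iff]
  rintro s (⟨U, hU, rfl⟩ | ⟨U, hU, rfl⟩)
  · have : (fun p : VClosed X × X =>
        ((⟨(fun s : M => lam s p.2) '' (S : Set M) ∪ lam m '' p.1.carrier,
            hcl p.1.carrier p.1.isClosed p.2⟩ : VClosed X))) ⁻¹'
        {K : VClosed X | (K.carrier ∩ U).Nonempty} =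
        (⋃ s ∈ S, {p : VClosed X × X | lam s p.2 ∈ U}) ∪
        (Prod.fst ⁻¹' {K : VClosed X | (K.carrier ∩ lam m ⁻¹' U).Nonempty}) := by
      ext ⟨K, x⟩
      simp only [Set.mem_preimage, Set.mem_setOf_eq, Set.mem_union, Set.mem_iUnion,
        Set.union_inter_distrib_right, Set.union_nonempty]
      constructor
      · rintro (⟨_, ⟨⟨s, hs, rfl⟩, hy⟩⟩ | ⟨_, ⟨⟨z, hz, rfl⟩, hy⟩⟩)
        · exact Or.inl ⟨s, hs, hy⟩
        · exact Or.inr ⟨z, hz, hy⟩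
      · rintro (⟨s, hs, hy⟩ | ⟨z, hz, hy⟩)
        · exact Or.inl ⟨lam s x, ⟨s, hs, rfl⟩, hy⟩
        · exact Or.inr ⟨lam m z, ⟨z, hz, rfl⟩, hy⟩
    rw [this]
    refine IsOpen.union (isOpen_biUnion fun s _ => ?_) ?_
    · exact (hU.preimage ((hcont s).comp continuous_snd))
    · refine continuous_fst.isOpen_preimage _ ?_
      exact TopologicalSpace.isOpen_generateFrom_of_mem
        (Or.inl ⟨lam m ⁻¹' U, hU.preimage (hcont m), rfl⟩)
  · have : (fun p : VClosed X × X =>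
        ((⟨(fun s : M => lam s p.2) '' (S : Set M) ∪ lam m '' p.1.carrier,
            hcl p.1.carrier p.1.isClosed p.2⟩ : VClosed X))) ⁻¹'
        {K : VClosed X | K.carrier ⊆ U} =
        (⋂ s ∈ S, {p : VClosed X × X | lam s p.2 ∈ U}) ∩
        (Prod.fst ⁻¹' {K : VClosed X | K.carrier ⊆ lam m ⁻¹' U}) := by
      ext ⟨K, x⟩
      simp only [Set.mem_preimage, Set.mem_setOf_eq, Set.union_subset_iff, Set.mem_inter_iff,
        Set.mem_iInter, Set.image_subset_iff]
      constructor
      · rintro ⟨h1, h2⟩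
        exact ⟨fun s hs => h1 hs, h2⟩
      · rintro ⟨h1, h2⟩
        exact ⟨fun s hs => h1 s hs, h2⟩
    rw [this]
    refine IsOpen.inter (isOpen_biInter_finset fun s _ => ?_) ?_
    · exact hU.preimage ((hcont s).comp continuous_snd)
    · refine continuous_fst.isOpen_preimage _ ?_
      exact TopologicalSpace.isOpen_generateFrom_of_mem
        (Or.inr ⟨lam m ⁻¹' U, hU.preimage (hcont m), rfl⟩)
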